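/- Let H = (V, E) be a bipartite graph and b : V → ℤ_{≥0}. Then H has a b-factor if and only if for every subset X ⊆ V, the number of edges of H with both endpoints in X is at least Σ_{v∈X} b(v) - (1/2)·Σ_{v∈V} b(v). -/

import Mathlib

section BFactorAux

variable {A B : Type} [Fintype A] [Fintype B] [DecidableEq A] [DecidableEq B]

private lemma card_filter_val {γ : Type} [DecidableEq γ] (E : Finset γ) (P : γ → Prop)
    [DecidablePred P] :
    ((Finset.univ : Finset {x // x ∈ E}).filter (fun e => P e.1)).card = (E.filter P).card := by
  apply Finset.card_bij (fun e _ => e.1)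
  · intro e he
    simp only [Finset.mem_filter] at he ⊢
    exact ⟨e.2, he.2⟩
  · intro e1 h1 e2 h2 h; exact Subtype.ext h
  · intro x hx
    simp only [Finset.mem_filter] at hx
    exact ⟨⟨x, hx.1⟩, by simp [hx.2], rfl⟩

private lemma filter_card_sum {γ δ : Type} [DecidableEq δ] (F : Finset γ) (f : γ → δ)
    (X : Finset δ) :
    (F.filter fun e => f e ∈ X).card = ∑ a ∈ X, (F.filter fun e => f e = a).card := by
  rw [Finset.card_eq_sum_card_fiberwise (f := f) (s := F.filter fun e => f e ∈ X) (t := X) (fun e he => (Finset.mem_filter.mp he).2)]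
  apply Finset.sum_congr rfl
  intro a ha
  congr 1
  ext e
  simp only [Finset.mem_filter]
  constructor
  · rintro ⟨⟨h1, h2⟩, h3⟩; exact ⟨h1, h3⟩
  · rintro ⟨h1, h2⟩; exact ⟨⟨h1, h2 ▸ ha⟩, h2⟩

/-- The bipartite "gadget" graph for Hall's theorem: left vertices are copies of `A`-vertices
together with one node per edge; right vertices are copies of `B`-vertices together with one
node per edge. -/
private def hallT (E : Finset (A × B)) (bA : A → ℕ) (bB : B → ℕ) :
    ((Σ a : A, Fin (bA a)) ⊕ {e : A × B // e ∈ E}) →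
      Finset ((Σ b : B, Fin (bB b)) ⊕ {e : A × B // e ∈ E}) :=
  Sum.elim
    (fun p => (Finset.univ.filter (fun e : {e : A × B // e ∈ E} => e.1.1 = p.1)).image Sum.inr)
    (fun e => insert (Sum.inr e)
      ((Finset.univ : Finset (Fin (bB e.1.2))).image (fun j => Sum.inl ⟨e.1.2, j⟩)))

private lemma mem_hallT_inl {E : Finset (A × B)} {bA : A → ℕ} {bB : B → ℕ}
    {p : Σ a : A, Fin (bA a)} {x : (Σ b : B, Fin (bB b)) ⊕ {e : A × B // e ∈ E}} :
    x ∈ hallT E bA bB (Sum.inl p) ↔ ∃ e : {e : A × B // e ∈ E}, e.1.1 = p.1 ∧ x = Sum.inr e := by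
  simp [hallT, eq_comm]

private lemma mem_hallT_inr {E : Finset (A × B)} {bA : A → ℕ} {bB : B → ℕ}
    {eE : {e : A × B // e ∈ E}} {x : (Σ b : B, Fin (bB b)) ⊕ {e : A × B // e ∈ E}} :
    x ∈ hallT E bA bB (Sum.inr eE) ↔
      x = Sum.inr eE ∨ ∃ j : Fin (bB eE.1.2), x = Sum.inl ⟨eE.1.2, j⟩ := by
  simp [hallT, eq_comm]

/-- The hard direction: the deficiency condition (in `ℕ` form) yields a `b`-factor. -/
private theorem bFactor_exists (E : Finset (A × B)) (bA : A → ℕ) (bB : B → ℕ)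
    (hT : ∑ a : A, bA a = ∑ b : B, bB b)
    (key : ∀ (XA : Finset A) (XB : Finset B),
      ∑ a ∈ XA, bA a ≤ (E.filter fun e => e.1 ∈ XA ∧ e.2 ∉ XB).card + ∑ b ∈ XB, bB b) :
    ∃ F ⊆ E, (∀ a : A, (F.filter (fun e => e.1 = a)).card = bA a) ∧
              (∀ b : B, (F.filter (fun e => e.2 = b)).card = bB b) := by
  classical
  set t := hallT E bA bB with ht
  -- Hall's condition
  have hall : ∀ s : Finset ((Σ a : A, Fin (bA a)) ⊕ {e : A × B // e ∈ E}),
      s.card ≤ (s.biUnion t).card := by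
    intro s
    set sA := s.toLeft with hsA
    set sY := s.toRight with hsY
    set TA : Finset A := sA.image Sigma.fst with hTA
    set XB : Finset B := sY.image (fun e => e.1.2) with hXB
    set N1 : Finset ((Σ b : B, Fin (bB b)) ⊕ {e : A × B // e ∈ E}) :=
      (Finset.univ.filter (fun e : {e : A × B // e ∈ E} => e.1.1 ∈ TA ∨ e ∈ sY)).image Sum.inr
      with hN1
    set N2 : Finset ((Σ b : B, Fin (bB b)) ⊕ {e : A × B // e ∈ E}) :=
      (XB.sigma (fun b => (Finset.univ : Finset (Fin (bB b))))).image Sum.inl with hN2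
    have hsub1 : N1 ⊆ s.biUnion t := by
      intro x hx
      rw [hN1, Finset.mem_image] at hx
      obtain ⟨e, he, rfl⟩ := hx
      rw [Finset.mem_filter] at he
      rcases he.2 with hA | hY
      · rw [hTA, Finset.mem_image] at hA
        obtain ⟨p, hp, hpe⟩ := hA
        rw [Finset.mem_biUnion]
        refine ⟨Sum.inl p, Finset.mem_toLeft.mp hp, ?_⟩
        rw [ht, mem_hallT_inl]
        exact ⟨e, hpe.symm, rfl⟩
      · rw [Finset.mem_biUnion]
        refine ⟨Sum.inr e, Finset.mem_toRight.mp hY, ?_⟩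
        rw [ht, mem_hallT_inr]
        exact Or.inl rfl
    have hsub2 : N2 ⊆ s.biUnion t := by
      intro x hx
      rw [hN2, Finset.mem_image] at hx
      obtain ⟨⟨b, j⟩, hb, rfl⟩ := hx
      rw [Finset.mem_sigma] at hb
      have hb' := hb.1
      rw [hXB, Finset.mem_image] at hb'
      obtain ⟨e, he, hbe⟩ := hb'
      subst hbe
      rw [Finset.mem_biUnion]
      refine ⟨Sum.inr e, Finset.mem_toRight.mp he, ?_⟩
      rw [ht, mem_hallT_inr]
      exact Or.inr ⟨j, rfl⟩
    have hdisj : Disjoint N1 N2 := by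
      rw [Finset.disjoint_left]
      intro x hx1 hx2
      rw [hN1, Finset.mem_image] at hx1
      rw [hN2, Finset.mem_image] at hx2
      obtain ⟨e, _, rfl⟩ := hx1
      obtain ⟨q, _, hq⟩ := hx2
      exact Sum.inl_ne_inr hq
    have hNcard : (Finset.univ.filter
          (fun e : {e : A × B // e ∈ E} => e.1.1 ∈ TA ∨ e ∈ sY)).card + ∑ b ∈ XB, bB b
        ≤ (s.biUnion t).card := by
      have h1 : N1.card = (Finset.univ.filter
          (fun e : {e : A × B // e ∈ E} => e.1.1 ∈ TA ∨ e ∈ sY)).card :=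
        Finset.card_image_of_injective _ Sum.inr_injective
      have h2 : N2.card = ∑ b ∈ XB, bB b := by
        rw [hN2, Finset.card_image_of_injective _ Sum.inl_injective, Finset.card_sigma]
        simp
      calc _ = N1.card + N2.card := by rw [h1, h2]
        _ = (N1 ∪ N2).card := (Finset.card_union_of_disjoint hdisj).symm
        _ ≤ (s.biUnion t).card := Finset.card_le_card (Finset.union_subset hsub1 hsub2)
    -- arithmetic
    have hAcard : sA.card ≤ ∑ a ∈ TA, bA a := by
      have hsub : sA ⊆ TA.sigma (fun a => (Finset.univ : Finset (Fin (bA a)))) := by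
        intro p hp
        rw [Finset.mem_sigma]
        exact ⟨Finset.mem_image_of_mem _ hp, Finset.mem_univ _⟩
      calc sA.card ≤ _ := Finset.card_le_card hsub
        _ = ∑ a ∈ TA, bA a := by rw [Finset.card_sigma]; simp
    have hsplitY : (sY.filter fun e => e.1.1 ∈ TA).card +
        (sY.filter fun e => ¬ e.1.1 ∈ TA).card = sY.card :=
      Finset.card_filter_add_card_filter_not _
    have hsplitN : (Finset.univ.filter
          (fun e : {e : A × B // e ∈ E} => e.1.1 ∈ TA ∨ e ∈ sY)).card
        = (Finset.univ.filter (fun e : {e : A × B // e ∈ E} => e.1.1 ∈ TA)).card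
          + (sY.filter fun e => ¬ e.1.1 ∈ TA).card := by
      have : (Finset.univ.filter (fun e : {e : A × B // e ∈ E} => e.1.1 ∈ TA ∨ e ∈ sY))
          = (Finset.univ.filter (fun e : {e : A × B // e ∈ E} => e.1.1 ∈ TA))
            ∪ (sY.filter fun e => ¬ e.1.1 ∈ TA) := by
        ext e
        simp only [Finset.mem_union, Finset.mem_filter, Finset.mem_univ, true_and]
        tauto
      rw [this, Finset.card_union_of_disjoint]
      rw [Finset.disjoint_left]
      intro e he1 he2
      exact (Finset.mem_filter.mp he2).2 (Finset.mem_filter.mp he1).2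
    have hsplitT : (Finset.univ.filter (fun e : {e : A × B // e ∈ E} => e.1.1 ∈ TA)).card
        = (Finset.univ.filter
            (fun e : {e : A × B // e ∈ E} => e.1.1 ∈ TA ∧ e.1.2 ∈ XB)).card
          + (Finset.univ.filter
            (fun e : {e : A × B // e ∈ E} => e.1.1 ∈ TA ∧ ¬ e.1.2 ∈ XB)).card := by
      rw [← Finset.card_filter_add_card_filter_not
        (s := Finset.univ.filter (fun e : {e : A × B // e ∈ E} => e.1.1 ∈ TA))
        (p := fun e => e.1.2 ∈ XB), Finset.filter_filter, Finset.filter_filter]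
    have hc1 : (sY.filter fun e => e.1.1 ∈ TA).card ≤ (Finset.univ.filter
        (fun e : {e : A × B // e ∈ E} => e.1.1 ∈ TA ∧ e.1.2 ∈ XB)).card := by
      apply Finset.card_le_card
      intro e he
      rw [Finset.mem_filter] at he ⊢
      exact ⟨Finset.mem_univ _, he.2, Finset.mem_image_of_mem _ he.1⟩
    have hkey : ∑ a ∈ TA, bA a ≤ (Finset.univ.filter
        (fun e : {e : A × B // e ∈ E} => e.1.1 ∈ TA ∧ ¬ e.1.2 ∈ XB)).card
        + ∑ b ∈ XB, bB b := by
      have := key TA XB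
      rwa [← card_filter_val E (fun e => e.1 ∈ TA ∧ e.2 ∉ XB)] at this
    have hscard : s.card = sA.card + sY.card := by
      rw [hsA, hsY, Finset.card_toLeft_add_card_toRight]
    omega
  -- Apply Hall's theorem
  obtain ⟨f, hinj, hmem⟩ := (Finset.all_card_le_biUnion_card_iff_exists_injective t).mp hall
  have hcard : Fintype.card ((Σ a : A, Fin (bA a)) ⊕ {e : A × B // e ∈ E})
      = Fintype.card ((Σ b : B, Fin (bB b)) ⊕ {e : A × B // e ∈ E}) := by
    simp [Fintype.card_sigma, hT]
  have hbij : Function.Bijective f :=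
    (Fintype.bijective_iff_injective_and_card f).mpr ⟨hinj, hcard⟩
  -- Extract the b-factor
  set F : Finset (A × B) := (Finset.univ.filter
      (fun e : {e : A × B // e ∈ E} => ∃ p, f (Sum.inl p) = Sum.inr e)).image
      (fun e => e.1) with hF
  have hFE : F ⊆ E := by
    intro x hx
    rw [hF, Finset.mem_image] at hx
    obtain ⟨e, _, rfl⟩ := hx
    exact e.2
  refine ⟨F, hFE, ?_, ?_⟩
  · -- degrees on the A side
    intro a
    have himg : F.filter (fun e => e.1 = a) = (Finset.univ.filter
        (fun e : {e : A × B // e ∈ E} => (∃ p, f (Sum.inl p) = Sum.inr e) ∧ e.1.1 = a)).image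
        (fun e => e.1) := by
      rw [hF, Finset.filter_image, Finset.filter_filter]
    rw [himg, Finset.card_image_of_injective _ Subtype.val_injective]
    have hPa : (Finset.univ.filter (fun p : Σ a', Fin (bA a') => p.1 = a)).card = bA a := by
      have : (Finset.univ.filter (fun p : Σ a', Fin (bA a') => p.1 = a))
          = Finset.sigma {a} (fun a' => (Finset.univ : Finset (Fin (bA a')))) := by
        ext p
        simp [Finset.mem_sigma]
      rw [this, Finset.card_sigma]
      simp
    rw [← hPa]
    apply Finset.card_bij (fun e he => ((Finset.mem_filter.mp he).2.1).choose)
    · intro e he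
      have hspec := ((Finset.mem_filter.mp he).2.1).choose_spec
      have hmem' := hmem (Sum.inl ((Finset.mem_filter.mp he).2.1).choose)
      rw [ht, mem_hallT_inl] at hmem'
      obtain ⟨e', he', heq⟩ := hmem'
      rw [hspec] at heq
      have : e' = e := Sum.inr_injective heq.symm
      subst this
      rw [Finset.mem_filter]
      exact ⟨Finset.mem_univ _, he' ▸ (Finset.mem_filter.mp he).2.2⟩
    · intro e1 h1 e2 h2 hpe
      have s1 := ((Finset.mem_filter.mp h1).2.1).choose_spec
      have s2 := ((Finset.mem_filter.mp h2).2.1).choose_spec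
      rw [hpe] at s1
      rw [s1] at s2
      exact Sum.inr_injective s2
    · intro p hp
      have hp1 : p.1 = a := (Finset.mem_filter.mp hp).2
      have hmem' := hmem (Sum.inl p)
      rw [ht, mem_hallT_inl] at hmem'
      obtain ⟨e, he1, he2⟩ := hmem'
      have heF : e ∈ Finset.univ.filter
          (fun e : {e : A × B // e ∈ E} => (∃ p, f (Sum.inl p) = Sum.inr e) ∧ e.1.1 = a) := by
        rw [Finset.mem_filter]
        exact ⟨Finset.mem_univ _, ⟨p, he2⟩, he1.trans hp1⟩
      refine ⟨e, heF, ?_⟩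
      have hspec := ((Finset.mem_filter.mp heF).2.1).choose_spec
      have : f (Sum.inl ((Finset.mem_filter.mp heF).2.1).choose) = f (Sum.inl p) := by
        rw [hspec, ← he2]
      exact Sum.inl_injective (hinj this)
  · -- degrees on the B side
    intro b
    have himg : F.filter (fun e => e.2 = b) = (Finset.univ.filter
        (fun e : {e : A × B // e ∈ E} => (∃ p, f (Sum.inl p) = Sum.inr e) ∧ e.1.2 = b)).image
        (fun e => e.1) := by
      rw [hF, Finset.filter_image, Finset.filter_filter]
    rw [himg, Finset.card_image_of_injective _ Subtype.val_injective]
    have hPb : (Finset.univ.filter (fun q : Σ b', Fin (bB b') => q.1 = b)).card = bB b := by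
      have : (Finset.univ.filter (fun q : Σ b', Fin (bB b') => q.1 = b))
          = Finset.sigma {b} (fun b' => (Finset.univ : Finset (Fin (bB b')))) := by
        ext q
        simp [Finset.mem_sigma]
      rw [this, Finset.card_sigma]
      simp
    rw [← hPb]
    -- each edge of F at b is matched (under f, as an edge-node) to a copy of b
    have hex : ∀ e : {e : A × B // e ∈ E},
        (∃ p, f (Sum.inl p) = Sum.inr e) → ∃ q, f (Sum.inr e) = Sum.inl q := by
      intro e ⟨p, hp⟩
      have hmem' := hmem (Sum.inr e)
      rw [ht, mem_hallT_inr] at hmem'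
      rcases hmem' with h1 | ⟨j, hj⟩
      · exfalso
        have : Sum.inl p = Sum.inr e := hinj (hp.trans h1.symm)
        exact Sum.inl_ne_inr this
      · exact ⟨⟨e.1.2, j⟩, hj⟩
    apply Finset.card_bij (fun e he => (hex e (Finset.mem_filter.mp he).2.1).choose)
    · intro e he
      have hspec := (hex e (Finset.mem_filter.mp he).2.1).choose_spec
      have hmem' := hmem (Sum.inr e)
      rw [ht, mem_hallT_inr] at hmem'
      rcases hmem' with h1 | ⟨j, hj⟩
      · exfalso
        obtain ⟨p, hp⟩ := (Finset.mem_filter.mp he).2.1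
        exact Sum.inl_ne_inr (hinj (hp.trans h1.symm))
      · rw [hspec] at hj
        have hq : (hex e (Finset.mem_filter.mp he).2.1).choose = ⟨e.1.2, j⟩ :=
          Sum.inl_injective hj
        rw [Finset.mem_filter]
        refine ⟨Finset.mem_univ _, ?_⟩
        rw [hq]
        exact (Finset.mem_filter.mp he).2.2
    · intro e1 h1 e2 h2 hpe
      have s1 := (hex e1 (Finset.mem_filter.mp h1).2.1).choose_spec
      have s2 := (hex e2 (Finset.mem_filter.mp h2).2.1).choose_spec
      rw [hpe] at s1
      rw [← s2] at s1
      exact Subtype.ext (congrArg Subtype.val (Sum.inr_injective (hinj s1)))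
    · intro q hq
      have hq1 : q.1 = b := (Finset.mem_filter.mp hq).2
      obtain ⟨i0, hi0⟩ := hbij.surjective (Sum.inl q)
      rcases i0 with p | e
      · exfalso
        have hmem' := hmem (Sum.inl p)
        rw [ht, mem_hallT_inl] at hmem'
        obtain ⟨e', _, he'⟩ := hmem'
        rw [hi0] at he'
        exact Sum.inl_ne_inr he'
      · -- f (Sum.inr e) = Sum.inl q
        have hmem' := hmem (Sum.inr e)
        rw [ht, mem_hallT_inr] at hmem'
        rcases hmem' with h1 | ⟨j, hj⟩
        · exfalso
          rw [hi0] at h1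
          exact Sum.inl_ne_inr h1
        have hq2 : q = ⟨e.1.2, j⟩ := Sum.inl_injective ((hi0.symm.trans hj))
        have heb : e.1.2 = b := by rw [← hq1, hq2]
        -- e is in F
        have heF : ∃ p, f (Sum.inl p) = Sum.inr e := by
          obtain ⟨i1, hi1⟩ := hbij.surjective (Sum.inr e)
          rcases i1 with p | e''
          · exact ⟨p, hi1⟩
          · exfalso
            have hmem'' := hmem (Sum.inr e'')
            rw [ht, mem_hallT_inr] at hmem''
            rcases hmem'' with h2 | ⟨j', hj'⟩
            · rw [hi1] at h2
              have : e = e'' := Sum.inr_injective h2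
              subst this
              rw [hi1] at hi0
              exact Sum.inr_ne_inl hi0
            · rw [hi1] at hj'
              exact Sum.inr_ne_inl hj'
        have heS : e ∈ Finset.univ.filter
            (fun e : {e : A × B // e ∈ E} => (∃ p, f (Sum.inl p) = Sum.inr e) ∧ e.1.2 = b) := by
          rw [Finset.mem_filter]
          exact ⟨Finset.mem_univ _, heF, heb⟩
        refine ⟨e, heS, ?_⟩
        have hspec := (hex e (Finset.mem_filter.mp heS).2.1).choose_spec
        exact Sum.inl_injective (hspec.symm.trans hi0)

end BFactorAux

/-- Existence of a `b`-factor in a bipartite graph (Schrijver, Corollary 21.4a).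
The bipartite graph has parts `A`, `B` and edge set `E ⊆ A × B`; a `b`-factor
is a set of edges `F ⊆ E` such that every vertex `v` is incident to exactly
`b v` edges of `F`. It exists iff every subset `X` of vertices spans at least
`∑_{v ∈ X} b v - (1/2) ∑_{v} b v` edges. -/
theorem bFactor_iff {A B : Type} [Fintype A] [Fintype B] [DecidableEq A] [DecidableEq B]
    (E : Finset (A × B)) (bA : A → ℕ) (bB : B → ℕ) :
    (∃ F ⊆ E, (∀ a : A, (F.filter (fun e => e.1 = a)).card = bA a) ∧
              (∀ b : B, (F.filter (fun e => e.2 = b)).card = bB b)) ↔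
    (∀ (XA : Finset A) (XB : Finset B),
      ((∑ a ∈ XA, (bA a : ℚ)) + ∑ b ∈ XB, (bB b : ℚ)) -
          ((∑ a : A, (bA a : ℚ)) + ∑ b : B, (bB b : ℚ)) / 2 ≤
        ((E.filter (fun e => e.1 ∈ XA ∧ e.2 ∈ XB)).card : ℚ)) := by
  classical
  constructor
  · rintro ⟨F, hFE, hA, hB⟩ XA XB
    have hFA : ∀ X : Finset A, (F.filter fun e => e.1 ∈ X).card = ∑ a ∈ X, bA a := by
      intro X
      rw [filter_card_sum F Prod.fst X]
      exact Finset.sum_congr rfl (fun a _ => hA a)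
    have hFB : ∀ X : Finset B, (F.filter fun e => e.2 ∈ X).card = ∑ b ∈ X, bB b := by
      intro X
      rw [filter_card_sum F Prod.snd X]
      exact Finset.sum_congr rfl (fun b _ => hB b)
    have hcardA : F.card = ∑ a : A, bA a := by
      have h1 : (F.filter fun e => e.1 ∈ (Finset.univ : Finset A)) = F := by simp
      rw [← h1, hFA]
    have hcardB : F.card = ∑ b : B, bB b := by
      have h1 : (F.filter fun e => e.2 ∈ (Finset.univ : Finset B)) = F := by simp
      rw [← h1, hFB]
    have hUI := Finset.card_union_add_card_inter (F.filter fun e => e.1 ∈ XA)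
      (F.filter fun e => e.2 ∈ XB)
    have hUle : ((F.filter fun e => e.1 ∈ XA) ∪ (F.filter fun e => e.2 ∈ XB)).card ≤ F.card :=
      Finset.card_le_card (Finset.union_subset (Finset.filter_subset _ _)
        (Finset.filter_subset _ _))
    have hIeq : (F.filter fun e => e.1 ∈ XA) ∩ (F.filter fun e => e.2 ∈ XB)
        = F.filter (fun e => e.1 ∈ XA ∧ e.2 ∈ XB) :=
      (Finset.filter_and _ _ _).symm
    have hc : (F.filter (fun e => e.1 ∈ XA ∧ e.2 ∈ XB)).card
        ≤ (E.filter (fun e => e.1 ∈ XA ∧ e.2 ∈ XB)).card :=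
      Finset.card_le_card (Finset.filter_subset_filter _ hFE)
    rw [hIeq] at hUI
    have key : (∑ a ∈ XA, bA a) + (∑ b ∈ XB, bB b)
        ≤ (E.filter (fun e => e.1 ∈ XA ∧ e.2 ∈ XB)).card + F.card := by
      have h1 := hFA XA
      have h2 := hFB XB
      omega
    have kq : (∑ a ∈ XA, (bA a : ℚ)) + ∑ b ∈ XB, (bB b : ℚ)
        ≤ ((E.filter (fun e => e.1 ∈ XA ∧ e.2 ∈ XB)).card : ℚ) + F.card := by
      exact_mod_cast key
    have haq : (∑ a : A, (bA a : ℚ)) = (F.card : ℚ) := by exact_mod_cast hcardA.symm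
    have hbq : (∑ b : B, (bB b : ℚ)) = (F.card : ℚ) := by exact_mod_cast hcardB.symm
    linarith
  · intro h
    have h1 := h Finset.univ ∅
    have h2 := h ∅ Finset.univ
    simp only [Finset.notMem_empty, Finset.mem_univ, and_true, true_and, and_false, false_and,
      Finset.filter_false, Finset.card_empty, Finset.sum_empty, Nat.cast_zero] at h1 h2
    have hTq : (∑ a : A, (bA a : ℚ)) = ∑ b : B, (bB b : ℚ) := by linarith
    have hT : ∑ a : A, bA a = ∑ b : B, bB b := by exact_mod_cast hTq
    apply bFactor_exists E bA bB hT
    intro XA XB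
    have hh := h XA XBᶜ
    have hce : (E.filter fun e => e.1 ∈ XA ∧ e.2 ∈ XBᶜ)
        = (E.filter fun e => e.1 ∈ XA ∧ e.2 ∉ XB) := by
      apply Finset.filter_congr
      intro e _
      simp [Finset.mem_compl]
    rw [hce] at hh
    have hsumc : ∑ b ∈ XBᶜ, (bB b : ℚ) = (∑ b : B, (bB b : ℚ)) - ∑ b ∈ XB, (bB b : ℚ) := by
      rw [eq_sub_iff_add_eq, Finset.sum_compl_add_sum]
    have hq : (∑ a ∈ XA, (bA a : ℚ))
        ≤ ((E.filter fun e => e.1 ∈ XA ∧ e.2 ∉ XB).card : ℚ) + ∑ b ∈ XB, (bB b : ℚ) := by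
      rw [hsumc] at hh
      linarith
    exact_mod_cast hq
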